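/- Let E ⊆ [0,∞) be strongly porous on the right at 0 with 0 an accumulation point of E. Then the preordered set (Ĩ_E^d, ⪯) contains a universal element if and only if there exists c > 1 such that for every K > 1 there is t > 0 with the property: for every connected component (a,b) of the exterior of E, if a < t and b/a > c then b/a > K. -/

import Mathlib

open Filter Set Topology ENNReal

/-- λ(E,0,h): the supremum of lengths of open subintervals of (0,h) disjoint from E. -/
noncomputable def lambda0 (E : Set ℝ) (h : ℝ) : ℝ :=
  sSup {l : ℝ | ∃ a b : ℝ, 0 ≤ a ∧ a ≤ b ∧ b ≤ h ∧ Set.Ioo a b ∩ E = ∅ ∧ l = b - a}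

/-- p⁺(E,0): the right porosity of E at 0. -/
noncomputable def porosity (E : Set ℝ) : ℝ :=
  Filter.limsup (fun h => lambda0 E h / h) (nhdsWithin 0 (Set.Ioi 0))

/-- 0 is an accumulation point of E (E ⊆ [0,∞), relative topology of [0,∞)). -/
def AccZero (E : Set ℝ) : Prop := ∀ ε > 0, ∃ x ∈ E, 0 < x ∧ x < ε

/-- (a,b) is a connected component of the exterior of E in [0,∞):
an open interval in [0,∞) disjoint from E, maximal with this property. -/
def IsCompExt (E : Set ℝ) (a b : ℝ) : Prop :=
  0 ≤ a ∧ a < b ∧ Set.Ioo a b ∩ E = ∅ ∧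
  ∀ c d : ℝ, 0 ≤ c → Set.Ioo a b ⊆ Set.Ioo c d → (c, d) ≠ (a, b) → Set.Ioo c d ∩ E ≠ ∅

/-- Membership in Ĩ_E. -/
def memIE (E : Set ℝ) (A : ℕ → ℝ × ℝ) : Prop :=
  (∀ n, 0 < (A n).1) ∧ (∀ n, IsCompExt E (A n).1 (A n).2) ∧
  Filter.Tendsto (fun n => (A n).1) Filter.atTop (nhds 0) ∧
  Filter.Tendsto (fun n => ((A n).2 - (A n).1) / (A n).2) Filter.atTop (nhds 1)

/-- Almost decreasing sequence: eventually nonincreasing. -/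
def AlmostDecr (τ : ℕ → ℝ) : Prop := ∀ᶠ n in Filter.atTop, τ (n + 1) ≤ τ n

/-- Membership in Ẽ₀^d: almost decreasing sequences in E∖{0} tending to 0. -/
def memE0d (E : Set ℝ) (τ : ℕ → ℝ) : Prop :=
  AlmostDecr τ ∧ Filter.Tendsto τ Filter.atTop (nhds 0) ∧ ∀ n, τ n ∈ E \ {0}

/-- Weak equivalence ≍ of sequences: c₁ aₙ ≤ γₙ ≤ c₂ aₙ for large n. -/
def SeqEquiv (a γ : ℕ → ℝ) : Prop :=
  ∃ c₁ c₂ : ℝ, 0 < c₁ ∧ 0 < c₂ ∧ ∀ᶠ n in Filter.atTop, c₁ * a n ≤ γ n ∧ γ n ≤ c₂ * a n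

/-- E is τ̃-strongly porous. -/
def StronglyPorousWrt (E : Set ℝ) (τ : ℕ → ℝ) : Prop :=
  ∃ A : ℕ → ℝ × ℝ, memIE E A ∧ SeqEquiv (fun n => (A n).1) τ

/-- E is completely strongly porous at 0. -/
def CSP (E : Set ℝ) : Prop := ∀ τ : ℕ → ℝ, memE0d E τ → StronglyPorousWrt E τ

/-- Membership in Ĩ_E^d: first coordinates almost decreasing. -/
def memIEd (E : Set ℝ) (A : ℕ → ℝ × ℝ) : Prop := memIE E A ∧ AlmostDecr (fun n => (A n).1)

/-- Membership in Ĩ_E^{sd}: first coordinates eventually strictly decreasing. -/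
def memIEsd (E : Set ℝ) (A : ℕ → ℝ × ℝ) : Prop :=
  memIE E A ∧ ∀ᶠ n in Filter.atTop, (A (n + 1)).1 < (A n).1

/-- The preorder Ã ⪯ L̃. -/
def Prec (A L : ℕ → ℝ × ℝ) : Prop :=
  ∃ N₁ : ℕ, ∃ f : ℕ → ℕ, ∀ n ≥ N₁, (A n).1 = (L (f n)).1

/-- L̃ is universal: every Ã ∈ Ĩ_E^d satisfies Ã ⪯ L̃. -/
def Universal (E : Set ℝ) (L : ℕ → ℝ × ℝ) : Prop :=
  ∀ A : ℕ → ℝ × ℝ, memIEd E A → Prec A L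

/-- M(L̃) = limsup lₙ/mₙ₊₁ (in [0,∞]). -/
noncomputable def Mq (L : ℕ → ℝ × ℝ) : ℝ≥0∞ :=
  Filter.limsup (fun n => ENNReal.ofReal ((L n).1 / (L (n + 1)).2)) Filter.atTop

/-- C(τ̃) = inf over {(aₙ,bₙ)} ∈ Ĩ_E with τₙ ≤ aₙ eventually of limsup aₙ/τₙ. -/
noncomputable def Cseq (E : Set ℝ) (τ : ℕ → ℝ) : ℝ≥0∞ :=
  ⨅ (A : ℕ → ℝ × ℝ) (_ : memIE E A ∧ ∀ᶠ n in Filter.atTop, τ n ≤ (A n).1),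
    Filter.limsup (fun n => ENNReal.ofReal ((A n).1 / τ n)) Filter.atTop

/-- C_E = sup over τ̃ ∈ Ẽ₀^d of C(τ̃). -/
noncomputable def CE (E : Set ℝ) : ℝ≥0∞ := ⨆ (τ : ℕ → ℝ) (_ : memE0d E τ), Cseq E τ

/-- E is uniformly strongly porous at 0. -/
def USP (E : Set ℝ) : Prop :=
  ∃ c : ℝ, 0 < c ∧ ∀ τ : ℕ → ℝ, memE0d E τ → ∃ A : ℕ → ℝ × ℝ, memIE E A ∧
    (∀ᶠ n in Filter.atTop, τ n ≤ (A n).1) ∧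
    Filter.limsup (fun n => ENNReal.ofReal ((A n).1 / τ n)) Filter.atTop ≤ ENNReal.ofReal c

section Aux

variable {E : Set ℝ}

lemma IsCompExt.pos (hacc : AccZero E) {a b : ℝ} (h : IsCompExt E a b) : 0 < a := by
  obtain ⟨ha, hab, hdisj, _⟩ := h
  rcases ha.lt_or_eq with h0 | h0
  · exact h0
  · exfalso
    obtain ⟨x, hxE, hx0, hxb⟩ := hacc b (h0 ▸ hab)
    have : x ∈ Set.Ioo a b ∩ E := ⟨⟨h0 ▸ hx0, hxb⟩, hxE⟩
    rw [hdisj] at this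
    exact this

lemma IsCompExt.uniq {a b b' : ℝ} (h : IsCompExt E a b) (h' : IsCompExt E a b') : b = b' := by
  by_contra hne
  rcases lt_or_gt_of_ne hne with hlt | hlt
  · exact h.2.2.2 a b' h.1 (Set.Ioo_subset_Ioo_right hlt.le)
      (fun hp => hne (congrArg Prod.snd hp).symm) h'.2.2.1
  · exact h'.2.2.2 a b h'.1 (Set.Ioo_subset_Ioo_right hlt.le)
      (fun hp => hne (congrArg Prod.snd hp)) h.2.2.1

lemma IsCompExt.sep {a b a' b' : ℝ} (h : IsCompExt E a b) (h' : IsCompExt E a' b')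
    (haa : a < a') : b ≤ a' := by
  by_contra hc
  push_neg at hc
  have hdisj : Set.Ioo a (max b b') ∩ E = ∅ := by
    rw [Set.eq_empty_iff_forall_notMem]
    rintro x ⟨⟨hx1, hx2⟩, hxE⟩
    rcases lt_or_ge x b with hxb | hxb
    · have : x ∈ Set.Ioo a b ∩ E := ⟨⟨hx1, hxb⟩, hxE⟩
      rw [h.2.2.1] at this; exact this
    · have hxb' : x < b' := by
        rcases le_total b' b with hbb | hbb
        · rw [max_eq_left hbb] at hx2; linarith
        · rw [max_eq_right hbb] at hx2; exact hx2
      have : x ∈ Set.Ioo a' b' ∩ E := ⟨⟨lt_of_lt_of_le hc hxb, hxb'⟩, hxE⟩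
      rw [h'.2.2.1] at this; exact this
  exact h'.2.2.2 a (max b b') h.1
    (Set.Ioo_subset_Ioo haa.le (le_max_right _ _))
    (fun hp => (ne_of_lt haa) (congrArg Prod.fst hp)) hdisj

lemma lambda0_set_nonempty {h : ℝ} (hh : 0 ≤ h) :
    {l : ℝ | ∃ a b : ℝ, 0 ≤ a ∧ a ≤ b ∧ b ≤ h ∧ Set.Ioo a b ∩ E = ∅ ∧ l = b - a}.Nonempty :=
  ⟨0, 0, 0, le_refl _, le_refl _, hh, by simp, by ring⟩

lemma lambda0_set_bdd {h : ℝ} :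
    BddAbove {l : ℝ | ∃ a b : ℝ, 0 ≤ a ∧ a ≤ b ∧ b ≤ h ∧ Set.Ioo a b ∩ E = ∅ ∧ l = b - a} := by
  refine ⟨h, ?_⟩
  rintro l ⟨a, b, ha, hab, hbh, _, rfl⟩
  linarith

lemma freq_lambda (hpor : porosity E = 1) {ε : ℝ} (hε : 0 < ε) (hε1 : ε < 1)
    {δ : ℝ} (hδ : 0 < δ) :
    ∃ h : ℝ, 0 < h ∧ h < δ ∧ (1 - ε) * h < lambda0 E h := by
  by_contra hcon
  push_neg at hcon
  have hev : ∀ᶠ h in nhdsWithin (0:ℝ) (Set.Ioi 0), lambda0 E h / h ≤ 1 - ε := by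
    filter_upwards [Ioo_mem_nhdsGT_of_mem (⟨le_refl _, hδ⟩ : (0:ℝ) ∈ Set.Ico 0 δ)] with h hh
    rw [div_le_iff₀ hh.1]
    exact hcon h hh.1 hh.2
  have hnn : ∀ᶠ h in nhdsWithin (0:ℝ) (Set.Ioi 0), 0 ≤ lambda0 E h / h := by
    filter_upwards [self_mem_nhdsWithin] with h hh
    have hh0 : (0:ℝ) < h := hh
    have : (0:ℝ) ≤ lambda0 E h :=
      le_csSup lambda0_set_bdd ⟨0, 0, le_refl _, le_refl _, hh0.le, by simp, by ring⟩
    positivity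
  have hbdd : BddBelow {a : ℝ | ∀ᶠ x in nhdsWithin (0:ℝ) (Set.Ioi 0), lambda0 E x / x ≤ a} := by
    refine ⟨0, fun a ha => ?_⟩
    simp only [Set.mem_setOf_eq] at ha
    obtain ⟨x, hx1, hx2⟩ := (ha.and hnn).exists
    linarith
  have hle : porosity E ≤ 1 - ε := by
    rw [porosity, Filter.limsup_eq]
    exact csInf_le hbdd hev
  rw [hpor] at hle; linarith

end Aux

section Aux2

variable {E : Set ℝ}

lemma exists_comp (hE : E ⊆ Set.Ici 0) (hacc : AccZero E)
    {α β : ℝ} (hα : 0 < α) (hαβ : α < β) (hdisj : Set.Ioo α β ∩ E = ∅)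
    (hB : (E ∩ Set.Ici β).Nonempty) :
    ∃ a b : ℝ, IsCompExt E a b ∧ 0 < a ∧ a ≤ α ∧ β ≤ b := by
  classical
  set A' : Set ℝ := (E ∩ Set.Icc 0 α) ∪ {0} with hA'def
  have hA'ne : (0:ℝ) ∈ A' := Or.inr rfl
  have hub : ∀ x ∈ A', x ≤ α := by
    rintro x (⟨_, _, hx⟩ | hx)
    · exact hx
    · simp only [Set.mem_singleton_iff] at hx; rw [hx]; exact hα.le
  have hA'bdd : BddAbove A' := ⟨α, hub⟩
  set a := sSup A' with hadef
  have haα : a ≤ α := csSup_le ⟨0, hA'ne⟩ hub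
  have hapos : 0 < a := by
    obtain ⟨x, hxE, hx0, hxα⟩ := hacc α hα
    have : x ≤ a := le_csSup hA'bdd (Or.inl ⟨hxE, hx0.le, hxα.le⟩)
    linarith
  have hBbdd : BddBelow (E ∩ Set.Ici β) := ⟨β, fun x hx => hx.2⟩
  set b := sInf (E ∩ Set.Ici β) with hbdef
  have hβb : β ≤ b := le_csInf hB (fun x hx => hx.2)
  have hab : a < b := lt_of_le_of_lt haα (lt_of_lt_of_le hαβ hβb)
  refine ⟨a, b, ⟨hapos.le, hab, ?_, ?_⟩, hapos, haα, hβb⟩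
  · rw [Set.eq_empty_iff_forall_notMem]
    rintro x ⟨⟨hax, hxb⟩, hxE⟩
    rcases le_or_gt x α with hxα | hxα
    · have : x ≤ a := le_csSup hA'bdd (Or.inl ⟨hxE, hE hxE, hxα⟩)
      linarith
    · rcases le_or_gt β x with hβx | hβx
      · have : b ≤ x := csInf_le hBbdd ⟨hxE, hβx⟩
        linarith
      · have : x ∈ Set.Ioo α β ∩ E := ⟨⟨hxα, hβx⟩, hxE⟩
        rw [hdisj] at this; exact this
  · intro c d hc hsub hne
    obtain ⟨hca, hbd⟩ := (Set.Ioo_subset_Ioo_iff hab).1 hsub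
    rcases hca.lt_or_eq with hca' | hca'
    · obtain ⟨e, heA, hce⟩ := exists_lt_of_lt_csSup ⟨0, hA'ne⟩ hca'
      rcases heA with ⟨heE, _, heα⟩ | he0
      · have hea : e ≤ a := le_csSup hA'bdd (Or.inl ⟨heE, hE heE, heα⟩)
        exact Set.Nonempty.ne_empty ⟨e, ⟨hce, lt_of_le_of_lt hea (lt_of_lt_of_le hab hbd)⟩, heE⟩
      · simp only [Set.mem_singleton_iff] at he0
        rw [he0] at hce; linarith
    · rcases hbd.lt_or_eq with hbd' | hbd'
      · obtain ⟨e, heB, hed⟩ := exists_lt_of_csInf_lt hB hbd'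
        have hbe : b ≤ e := csInf_le hBbdd heB
        exact Set.Nonempty.ne_empty ⟨e, ⟨by rw [hca']; linarith, hed⟩, heB.1⟩
      · exact absurd (by rw [hca', hbd'] : (c, d) = (a, b)) hne

lemma gaps (hE : E ⊆ Set.Ici 0) (hpor : porosity E = 1) (hacc : AccZero E) :
    ∀ R : ℝ, 0 < R → ∀ t : ℝ, 0 < t →
      ∃ a b : ℝ, IsCompExt E a b ∧ 0 < a ∧ a < t ∧ R < b / a := by
  intro R hR t ht
  obtain ⟨e₀, he₀E, he₀0, _⟩ := hacc 1 one_pos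
  set ε : ℝ := 1 / (R + 2) with hεdef
  have hR2 : (0:ℝ) < R + 2 := by linarith
  have hε : 0 < ε := by positivity
  have hε1 : ε < 1 := by rw [hεdef, div_lt_one hR2]; linarith
  have hεR : ε * (R + 2) = 1 := by rw [hεdef]; field_simp
  obtain ⟨h, hh0, hhδ, hlam⟩ := freq_lambda hpor hε hε1 (lt_min ht he₀0)
  unfold lambda0 at hlam
  obtain ⟨l, hlmem, hll⟩ :=
    exists_lt_of_lt_csSup (lambda0_set_nonempty hh0.le) hlam
  obtain ⟨α, β, hα0, hαβ', hβh, hdisjαβ, rfl⟩ := hlmem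
  have hεhs : (1 - ε) * h = h - ε * h := by ring
  have hαεh : α < ε * h := by linarith
  have hβbig : (1 - ε) * h < β := by linarith
  have hβpos : 0 < β := by nlinarith
  have hαpos : 0 < α := by
    rcases hα0.lt_or_eq with h0 | h0
    · exact h0
    · exfalso
      obtain ⟨x, hxE, hx0, hxβ⟩ := hacc β hβpos
      have : x ∈ Set.Ioo α β ∩ E := ⟨⟨h0 ▸ hx0, hxβ⟩, hxE⟩
      rw [hdisjαβ] at this; exact this
  have hαβ : α < β := by nlinarith
  have hB : (E ∩ Set.Ici β).Nonempty :=
    ⟨e₀, he₀E, le_of_lt (lt_of_le_of_lt hβh (lt_of_lt_of_le hhδ (min_le_right _ _)))⟩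
  obtain ⟨a, b, hcomp, hapos, haα, hβb⟩ := exists_comp hE hacc hαpos hαβ hdisjαβ hB
  refine ⟨a, b, hcomp, hapos, ?_, ?_⟩
  · have : ε * h < h := by nlinarith
    calc a ≤ α := haα
      _ < ε * h := hαεh
      _ < h := this
      _ < min t e₀ := hhδ
      _ ≤ t := min_le_left _ _
  · rw [lt_div_iff₀ hapos]
    have h1 : R * a < R * (ε * h) := by
      have := lt_of_le_of_lt haα hαεh
      nlinarith
    have h2 : R * (ε * h) ≤ (1 - ε) * h := by nlinarith
    have h3 : (1 - ε) * h < b := lt_of_lt_of_le hβbig hβb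
    linarith

lemma ratio_tendsto {A : ℕ → ℝ × ℝ} (hpos : ∀ n, 0 < (A n).1) (hlt : ∀ n, (A n).1 < (A n).2)
    (h : ∀ K : ℝ, 0 < K → ∀ᶠ n in Filter.atTop, K < (A n).2 / (A n).1) :
    Filter.Tendsto (fun n => ((A n).2 - (A n).1) / (A n).2) Filter.atTop (nhds 1) := by
  have hbpos : ∀ n, 0 < (A n).2 := fun n => lt_trans (hpos n) (hlt n)
  have hdiv : Filter.Tendsto (fun n => (A n).1 / (A n).2) Filter.atTop (nhds 0) := by
    rw [tendsto_order]
    constructor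
    · intro x hx
      exact Filter.Eventually.of_forall fun n =>
        lt_of_lt_of_le hx (div_nonneg (hpos n).le (hbpos n).le)
    · intro x hx
      filter_upwards [h (1 / x) (by positivity)] with n hn
      rw [div_lt_div_iff₀ (by positivity) (hpos n)] at hn
      rw [div_lt_iff₀ (hbpos n)]
      nlinarith [hbpos n, hpos n]
  have h1 : Filter.Tendsto (fun n => 1 - (A n).1 / (A n).2) Filter.atTop (nhds 1) := by
    have := Filter.Tendsto.const_sub (1:ℝ) hdiv
    simpa using this
  refine h1.congr fun n => ?_
  have hb := (hbpos n).ne'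
  field_simp

lemma memIE.ratio_large {A : ℕ → ℝ × ℝ} (hacc : AccZero E) (h : memIE E A) :
    ∀ K : ℝ, 0 < K → ∀ᶠ n in Filter.atTop, K < (A n).2 / (A n).1 := by
  obtain ⟨hpos, hcomp, _, hrat⟩ := h
  have hb : ∀ n, (A n).1 < (A n).2 := fun n => (hcomp n).2.1
  have hbpos : ∀ n, 0 < (A n).2 := fun n => lt_trans (hpos n) (hb n)
  have hdiv : Filter.Tendsto (fun n => (A n).1 / (A n).2) Filter.atTop (nhds 0) := by
    have h0 : Filter.Tendsto (fun n => 1 - ((A n).2 - (A n).1) / (A n).2) Filter.atTop (nhds 0) := by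
      have := Filter.Tendsto.const_sub (1:ℝ) hrat
      simpa using this
    refine h0.congr fun n => ?_
    have hbne := (hbpos n).ne'
    field_simp
    ring
  intro K hK
  filter_upwards [hdiv.eventually (gt_mem_nhds (show (0:ℝ) < 1 / K by positivity))] with n hn
  rw [div_lt_div_iff₀ (hbpos n) hK] at hn
  rw [lt_div_iff₀ (hpos n)]
  linarith

end Aux2

lemma exists_min_pos (l : ℕ → ℝ) (hl : ∀ k, 0 < l k) (N : ℕ) :
    ∃ δ : ℝ, 0 < δ ∧ ∀ k < N, δ ≤ l k := by
  induction N with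
  | zero => exact ⟨1, one_pos, fun k hk => absurd hk (Nat.not_lt_zero k)⟩
  | succ M ih =>
    obtain ⟨δ, hδ, hδk⟩ := ih
    refine ⟨min δ (l M), lt_min hδ (hl M), fun k hk => ?_⟩
    rcases Nat.lt_succ_iff_lt_or_eq.1 hk with h | h
    · exact le_trans (min_le_left _ _) (hδk k h)
    · rw [h]; exact min_le_right _ _

lemma nat_exists_min {p : ℕ → Prop} (h : ∃ n, p n) : ∃ n, p n ∧ ∀ m < n, ¬ p m := by
  classical
  exact ⟨Nat.find h, Nat.find_spec h, fun m hm => Nat.find_min h hm⟩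

theorem stmt13 (E : Set ℝ) (hE : E ⊆ Set.Ici 0) (hpor : porosity E = 1)
    (hacc : AccZero E) :
    (∃ L : ℕ → ℝ × ℝ, memIEd E L ∧ Universal E L) ↔
      ∃ c : ℝ, 1 < c ∧ ∀ K : ℝ, 1 < K → ∃ t : ℝ, 0 < t ∧
        ∀ a b : ℝ, IsCompExt E a b → a < t → c < b / a → K < b / a := by
  classical
  constructor
  · -- forward direction
    rintro ⟨L, ⟨hLIE, hLdec⟩, hLuniv⟩
    by_contra hcon
    push_neg at hcon
    have hLpos := hLIE.1
    have hLcomp := hLIE.2.1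
    have hLrat := memIE.ratio_large hacc hLIE
    have hcon' : ∀ n : ℕ, ∃ K : ℝ, 1 < K ∧ ∀ t : ℝ, 0 < t →
        ∃ p : ℝ × ℝ, IsCompExt E p.1 p.2 ∧ p.1 < t ∧ ((n:ℝ)+2) < p.2/p.1 ∧ p.2/p.1 ≤ K := by
      intro n
      have hn2 : (1:ℝ) < (n:ℝ) + 2 := by
        have h : (0:ℝ) ≤ (n:ℝ) := Nat.cast_nonneg n
        linarith
      obtain ⟨K, hK1, hKt⟩ := hcon ((n:ℝ)+2) hn2
      refine ⟨K, hK1, fun t ht => ?_⟩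
      obtain ⟨a, b, h1, h2, h3, h4⟩ := hKt t ht
      exact ⟨(a, b), h1, h2, h3, h4⟩
    choose K hK1 hKt using hcon'
    have hNex : ∀ n : ℕ, ∃ N : ℕ, ∀ k ≥ N, K n < (L k).2 / (L k).1 :=
      fun n => Filter.eventually_atTop.1 (hLrat (K n) (by linarith [hK1 n]))
    choose N hN using hNex
    choose δ hδpos hδle using fun n => exists_min_pos (fun k => (L k).1) hLpos (N n)
    have hstep : ∀ (n : ℕ) (u : ℝ), 0 < u → ∃ p : ℝ × ℝ, IsCompExt E p.1 p.2 ∧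
        p.1 < u ∧ p.1 < δ n ∧ p.1 < 1/((n:ℝ)+1) ∧ ((n:ℝ)+2) < p.2/p.1 ∧ p.2/p.1 ≤ K n := by
      intro n u hu
      have ht : 0 < min u (min (δ n) (1/((n:ℝ)+1))) :=
        lt_min hu (lt_min (hδpos n) (by positivity))
      obtain ⟨p, h1, h2, h3, h4⟩ := hKt n _ ht
      exact ⟨p, h1, lt_of_lt_of_le h2 (min_le_left _ _),
        lt_of_lt_of_le h2 (le_trans (min_le_right _ _) (min_le_left _ _)),
        lt_of_lt_of_le h2 (le_trans (min_le_right _ _) (min_le_right _ _)), h3, h4⟩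
    have hstep' : ∀ (n : ℕ) (u : ℝ), ∃ p : ℝ × ℝ, 0 < u → (IsCompExt E p.1 p.2 ∧
        p.1 < u ∧ p.1 < δ n ∧ p.1 < 1/((n:ℝ)+1) ∧ ((n:ℝ)+2) < p.2/p.1 ∧ p.2/p.1 ≤ K n) := by
      intro n u
      by_cases hu : 0 < u
      · exact (hstep n u hu).imp (fun p hp => fun _ => hp)
      · exact ⟨(1,2), fun h => absurd h hu⟩
    choose step hstepspec using hstep'
    let A : ℕ → ℝ × ℝ := fun n => Nat.rec (step 0 1) (fun k p => step (k+1) p.1) n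
    have hA0 : A 0 = step 0 1 := rfl
    have hAsucc : ∀ n, A (n+1) = step (n+1) (A n).1 := fun n => rfl
    have hAinv : ∀ n, IsCompExt E (A n).1 (A n).2 ∧ (A n).1 < δ n ∧ (A n).1 < 1/((n:ℝ)+1) ∧
        ((n:ℝ)+2) < (A n).2/(A n).1 ∧ (A n).2/(A n).1 ≤ K n := by
      intro n
      induction n with
      | zero =>
        have h := hstepspec 0 1 one_pos
        rw [← hA0] at h
        exact ⟨h.1, h.2.2.1, h.2.2.2.1, h.2.2.2.2.1, h.2.2.2.2.2⟩
      | succ m ih =>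
        have hpos : 0 < (A m).1 := (ih.1).pos hacc
        have h := hstepspec (m+1) (A m).1 hpos
        rw [← hAsucc m] at h
        exact ⟨h.1, h.2.2.1, h.2.2.2.1, h.2.2.2.2.1, h.2.2.2.2.2⟩
    have hApos : ∀ n, 0 < (A n).1 := fun n => ((hAinv n).1).pos hacc
    have hAdec : ∀ n, (A (n+1)).1 < (A n).1 := by
      intro n
      have h := hstepspec (n+1) (A n).1 (hApos n)
      rw [← hAsucc n] at h
      exact h.2.1
    have hAzero : Filter.Tendsto (fun n => (A n).1) Filter.atTop (nhds 0) := by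
      refine tendsto_of_tendsto_of_tendsto_of_le_of_le tendsto_const_nhds
        tendsto_one_div_add_atTop_nhds_zero_nat
        (fun n => (hApos n).le) (fun n => ((hAinv n).2.2.1).le)
    have hAIE : memIE E A := by
      refine ⟨hApos, fun n => (hAinv n).1, hAzero, ?_⟩
      apply ratio_tendsto hApos (fun n => ((hAinv n).1).2.1)
      intro Kr hKr
      obtain ⟨M, hM⟩ := exists_nat_ge Kr
      refine Filter.eventually_atTop.2 ⟨M, fun n hn => ?_⟩
      have h1 : (M:ℝ) ≤ (n:ℝ) := Nat.cast_le.2 hn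
      have h2 := (hAinv n).2.2.2.1
      linarith
    obtain ⟨N₁, f, hf⟩ := hLuniv A ⟨hAIE, Filter.Eventually.of_forall (fun n => (hAdec n).le)⟩
    have heq := hf N₁ le_rfl
    set k := f N₁ with hkdef
    have hcompA := (hAinv N₁).1
    have hbeq : (A N₁).2 = (L k).2 := by
      rw [heq] at hcompA
      exact hcompA.uniq (hLcomp k)
    have hratio_eq : (L k).2/(L k).1 = (A N₁).2/(A N₁).1 := by rw [heq, hbeq]
    rcases lt_or_ge k (N N₁) with hk | hk
    · have h1 := hδle N₁ k hk
      have h2 := (hAinv N₁).2.1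
      rw [heq] at h2
      linarith
    · have h1 := hN N₁ k hk
      have h2 := (hAinv N₁).2.2.2.2
      rw [hratio_eq] at h1
      linarith
  · -- backward direction
    rintro ⟨c, hc1, hcP⟩
    have hc0 : (0:ℝ) < c := by linarith
    set S : Set ℝ := {x | x < 1 ∧ ∃ y : ℝ, IsCompExt E x y ∧ c < y / x} with hSdef
    have hSpos : ∀ x ∈ S, 0 < x := by
      rintro x ⟨_, y, hcomp, _⟩
      exact hcomp.pos hacc
    have hSmem : ∀ t : ℝ, 0 < t → ∃ x ∈ S, x < t := by
      intro t ht
      obtain ⟨a, b, hcomp, hapos, halt, hrat⟩ :=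
        gaps hE hpor hacc c hc0 (min t 1) (lt_min ht one_pos)
      exact ⟨a, ⟨lt_of_lt_of_le halt (min_le_right _ _), b, hcomp, hrat⟩,
        lt_of_lt_of_le halt (min_le_left _ _)⟩
    have hsep : ∀ x ∈ S, ∀ x' ∈ S, x < x' → c * x < x' := by
      rintro x ⟨_, y, hcomp, hrat⟩ x' ⟨_, y', hcomp', _⟩ hlt
      have hyx : y ≤ x' := hcomp.sep hcomp' hlt
      have hxpos := hcomp.pos hacc
      rw [lt_div_iff₀ hxpos] at hrat
      linarith
    have hmax : ∀ u : ℝ, 0 < u → ∃ s, s ∈ S ∧ s < u ∧ ∀ x ∈ S, x < u → x ≤ s := by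
      intro u hu
      obtain ⟨x₀, hx₀S, hx₀u⟩ := hSmem u hu
      have hTne : (S ∩ Set.Iio u).Nonempty := ⟨x₀, hx₀S, hx₀u⟩
      have hTbdd : BddAbove (S ∩ Set.Iio u) := ⟨u, fun x hx => le_of_lt hx.2⟩
      have hs'pos : 0 < sSup (S ∩ Set.Iio u) :=
        lt_of_lt_of_le (hSpos x₀ hx₀S) (le_csSup hTbdd ⟨hx₀S, hx₀u⟩)
      have hlt : sSup (S ∩ Set.Iio u) / c < sSup (S ∩ Set.Iio u) := div_lt_self hs'pos hc1
      obtain ⟨s, hsT, hss⟩ := exists_lt_of_lt_csSup hTne hlt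
      refine ⟨s, hsT.1, hsT.2, ?_⟩
      intro x hxS hxu
      by_contra hxs
      push_neg at hxs
      have h1 : c * s < x := hsep s hsT.1 x hxS hxs
      have h2 : x ≤ sSup (S ∩ Set.Iio u) := le_csSup hTbdd ⟨hxS, hxu⟩
      have h3 : s < sSup (S ∩ Set.Iio u) / c := by rw [lt_div_iff₀ hc0]; linarith
      linarith
    have hmax' : ∀ u : ℝ, ∃ s, 0 < u → (s ∈ S ∧ s < u ∧ ∀ x ∈ S, x < u → x ≤ s) := by
      intro u
      by_cases hu : 0 < u
      · exact (hmax u hu).imp (fun s hs => fun _ => hs)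
      · exact ⟨0, fun h => absurd h hu⟩
    choose g hg using hmax'
    let a : ℕ → ℝ := fun n => Nat.rec (g 1) (fun _ p => g p) n
    have ha0 : a 0 = g 1 := rfl
    have hasucc : ∀ n, a (n+1) = g (a n) := fun n => rfl
    have haS : ∀ n, a n ∈ S := by
      intro n
      induction n with
      | zero => exact (hg 1 one_pos).1
      | succ m ih => rw [hasucc]; exact (hg (a m) (hSpos _ ih)).1
    have hapos : ∀ n, 0 < a n := fun n => hSpos _ (haS n)
    have hadec : ∀ n, a (n+1) < a n := fun n => by
      rw [hasucc]; exact (hg (a n) (hapos n)).2.1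
    have hamax : ∀ n, ∀ x ∈ S, x < a n → x ≤ a (n+1) := fun n x hx hlt => by
      rw [hasucc]; exact (hg (a n) (hapos n)).2.2 x hx hlt
    have hamax0 : ∀ x ∈ S, x ≤ a 0 := fun x hx => by
      rw [ha0]; exact (hg 1 one_pos).2.2 x hx hx.1
    have hgeo : ∀ n, a n ≤ a 0 * (1 / c) ^ n := by
      intro n
      induction n with
      | zero => simp
      | succ m ih =>
        have h1 : c * a (m+1) < a m := hsep _ (haS (m+1)) _ (haS m) (hadec m)
        have h2 : a (m+1) ≤ a m / c := by rw [le_div_iff₀ hc0]; linarith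
        calc a (m+1) ≤ a m / c := h2
          _ ≤ (a 0 * (1/c)^m) / c := by gcongr
          _ = a 0 * (1/c)^(m+1) := by rw [pow_succ]; ring
    have haz : Filter.Tendsto a Filter.atTop (nhds 0) := by
      have h1c : 0 ≤ 1/c := by positivity
      have h2c : 1/c < 1 := by rw [div_lt_one hc0]; linarith
      have hgeo0 : Filter.Tendsto (fun n : ℕ => a 0 * (1/c)^n) Filter.atTop (nhds 0) := by
        have := (tendsto_pow_atTop_nhds_zero_of_lt_one h1c h2c).const_mul (a 0)
        simpa using this
      exact tendsto_of_tendsto_of_tendsto_of_le_of_le tendsto_const_nhds hgeo0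
        (fun n => (hapos n).le) hgeo
    have hcov : ∀ s ∈ S, ∃ n, a n = s := by
      intro s hs
      have hspos := hSpos s hs
      have hex : ∃ n, a n ≤ s := by
        obtain ⟨n, hn⟩ := (haz.eventually (gt_mem_nhds hspos)).exists
        exact ⟨n, hn.le⟩
      obtain ⟨n₀, hle, hmin⟩ := nat_exists_min hex
      match n₀, hle, hmin with
      | 0, hle, _ => exact ⟨0, le_antisymm hle (hamax0 s hs)⟩
      | (m+1), hle, hmin =>
        have hprev : ¬ a m ≤ s := hmin m (Nat.lt_succ_self m)
        push_neg at hprev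
        exact ⟨m+1, le_antisymm hle (hamax m s hs hprev)⟩
    have hbex : ∀ n, ∃ y, IsCompExt E (a n) y ∧ c < y / a n := fun n => (haS n).2
    choose b hbcomp hbrat using hbex
    refine ⟨fun n => (a n, b n), ⟨⟨hapos, hbcomp, haz, ?_⟩, ?_⟩, ?_⟩
    · apply ratio_tendsto (A := fun n => (a n, b n)) hapos (fun n => (hbcomp n).2.1)
      intro Kr hKr
      obtain ⟨t, ht, hKt⟩ := hcP (max Kr 2) (lt_of_lt_of_le one_lt_two (le_max_right _ _))
      filter_upwards [haz.eventually (gt_mem_nhds ht)] with n hn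
      exact lt_of_le_of_lt (le_max_left Kr 2) (hKt (a n) (b n) (hbcomp n) hn (hbrat n))
    · exact Filter.Eventually.of_forall fun n => (hadec n).le
    · intro A hA
      obtain ⟨hAIE, hAdecr⟩ := hA
      have hrat := memIE.ratio_large hacc hAIE
      have h1 : ∀ᶠ n in Filter.atTop, (A n).1 ∈ S := by
        filter_upwards [hAIE.2.2.1.eventually (gt_mem_nhds one_pos), hrat c hc0] with n hn1 hn2
        exact ⟨hn1, (A n).2, hAIE.2.1 n, hn2⟩
      obtain ⟨M, hM⟩ := Filter.eventually_atTop.1 h1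
      have hfex : ∀ n : ℕ, ∃ k : ℕ, n ≥ M → (A n).1 = a k := by
        intro n
        by_cases hn : n ≥ M
        · obtain ⟨k, hk⟩ := hcov _ (hM n hn)
          exact ⟨k, fun _ => hk.symm⟩
        · exact ⟨0, fun h => absurd h hn⟩
      choose f hf using hfex
      exact ⟨M, f, fun n hn => hf n hn⟩
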